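/- (Pathwise Itô exponential) Let Y : [0,∞) → ℝ be continuous with Y_0 = 0 and continuous quadratic variation [Y] along grids (T_N), and set L_t := (1/2)[Y]_t and X_t := exp(Y_t − L_t). Then X satisfies the pathwise integral equation X_t = 1 + ∫_0^t X_s dY_s for all t ≥ 0, where ∫_0^t X_s dY_s = lim_N ∑_{t_i, t_{i+1} ∈ T_N, t_{i+1} ≤ t} X_{t_i}(Y_{t_{i+1}} − Y_{t_i}). -/

import Mathlib

open Filter Topology Set MeasureTheory

/-- A refining sequence of time grids: each grid is a strictly increasing
sequence starting at 0 and tending to infinity; grids are nested and the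
mesh tends to zero. -/
structure GridSeq where
  T : ℕ → ℕ → ℝ
  zero : ∀ N, T N 0 = 0
  mono : ∀ N, StrictMono (T N)
  unbounded : ∀ N, Filter.Tendsto (T N) Filter.atTop Filter.atTop
  nested : ∀ N, Set.range (T N) ⊆ Set.range (T (N + 1))
  mesh : ∀ ε > 0, ∃ N₀, ∀ N ≥ N₀, ∀ i, T N (i + 1) - T N i ≤ ε

/-- The grid sum `∑_{t_i, t_{i+1} ∈ τ, t_{i+1} ≤ t} f(t_i, t_{i+1})`. -/
noncomputable def gridSum (τ : ℕ → ℝ) (f : ℝ → ℝ → ℝ) (t : ℝ) : ℝ :=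
  ∑' i : ℕ, if τ (i + 1) ≤ t then f (τ i) (τ (i + 1)) else 0

/-- The grid sums of `f` along the grid sequence `G` converge to `L` at time `t`. -/
def ConvTo (G : GridSeq) (f : ℝ → ℝ → ℝ) (t L : ℝ) : Prop :=
  Filter.Tendsto (fun N => gridSum (G.T N) f t) Filter.atTop (nhds L)

/-- `X` has continuous quadratic variation `Q` along the grid sequence `G`. -/
def HasQV (G : GridSeq) (X Q : ℝ → ℝ) : Prop :=
  ContinuousOn Q (Set.Ici 0) ∧ Q 0 = 0 ∧
    ∀ t, ConvTo G (fun u v => (X v - X u) ^ 2) t (Q t)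

/-- `A` is locally of finite variation on `[0,∞)`. -/
def LocBV (A : ℝ → ℝ) : Prop := ∀ T > 0, BoundedVariationOn A (Set.Icc 0 T)

/-- `ξ` is an admissible integrand for `X`: locally `ξ_t = g(A_t, X_t)` with
`g ∈ C¹` and `A` continuous of finite variation. -/
def Admissible (X ξ : ℝ → ℝ) : Prop :=
  ∀ T > 0, ∃ (n : ℕ) (g : (Fin n → ℝ) → ℝ → ℝ) (A : ℝ → Fin n → ℝ),
    ContDiff ℝ 1 (Function.uncurry g) ∧
    (∀ k, ContinuousOn (fun t => A t k) (Set.Icc 0 T) ∧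
      BoundedVariationOn (fun t => A t k) (Set.Icc 0 T)) ∧
    ∀ t ∈ Set.Icc (0 : ℝ) T, ξ t = g (A t) (X t)

/-! ### Auxiliary machinery -/

open Classical in
/-- The first index whose grid point exceeds `t` (0 if none). -/
noncomputable def cutP (τ : ℕ → ℝ) (t : ℝ) : ℕ :=
  if h : ∃ i, t < τ i then Nat.find h else 0

/-- The number of full grid intervals `[τ i, τ (i+1)] ⊆ [0,t]`. -/
noncomputable def Kc (τ : ℕ → ℝ) (t : ℝ) : ℕ := cutP τ t - 1

section cut
variable {τ : ℕ → ℝ} (hm : StrictMono τ) (hub : Filter.Tendsto τ Filter.atTop Filter.atTop)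
  (h0 : τ 0 = 0)

include hub in
lemma cut_exists (t : ℝ) : ∃ i, t < τ i := (hub.eventually_gt_atTop t).exists

include hub hm in
lemma lt_cutP_iff {t : ℝ} {i : ℕ} : i < cutP τ t ↔ τ i ≤ t := by
  rw [cutP, dif_pos (cut_exists hub t)]
  constructor
  · intro h
    have := Nat.find_min (cut_exists hub t) h
    linarith [not_lt.mp this]
  · intro h
    by_contra hc
    push_neg at hc
    have := Nat.find_spec (cut_exists hub t)
    have : t < τ i := lt_of_lt_of_le this (hm.monotone hc)
    linarith

include hub hm h0 in
lemma cutP_pos {t : ℝ} (ht : 0 ≤ t) : 0 < cutP τ t :=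
  (lt_cutP_iff hm hub).mpr (by simpa [h0] using ht)

include hub hm h0 in
lemma lt_Kc_iff {t : ℝ} (ht : 0 ≤ t) {i : ℕ} : i < Kc τ t ↔ τ (i + 1) ≤ t := by
  rw [← lt_cutP_iff hm hub, Kc]
  have := cutP_pos hm hub h0 ht
  omega

include hub hm h0 in
lemma Kc_le {t : ℝ} (ht : 0 ≤ t) : τ (Kc τ t) ≤ t := by
  rw [← lt_cutP_iff hm hub, Kc]
  have := cutP_pos hm hub h0 ht
  omega

include hub hm h0 in
lemma Kc_succ_gt {t : ℝ} (ht : 0 ≤ t) : t < τ (Kc τ t + 1) := by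
  by_contra h
  push_neg at h
  have := (lt_cutP_iff hm hub (t := t) (i := Kc τ t + 1)).mpr h
  rw [Kc] at this
  have := cutP_pos hm hub h0 ht
  omega

include hub hm in
lemma cutP_mono {s t : ℝ} (hst : s ≤ t) : cutP τ s ≤ cutP τ t := by
  by_contra h
  push_neg at h
  have h1 : τ (cutP τ t) ≤ s := (lt_cutP_iff hm hub).mp h
  have h2 : ¬ (cutP τ t < cutP τ t) := lt_irrefl _
  exact h2 ((lt_cutP_iff hm hub).mpr (le_trans h1 hst))

include hub hm in
lemma Kc_mono {s t : ℝ} (hst : s ≤ t) : Kc τ s ≤ Kc τ t :=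
  Nat.sub_le_sub_right (cutP_mono hm hub hst) 1

include hub hm h0 in
lemma Kc_zero : Kc τ 0 = 0 := by
  by_contra h
  have h1 : 0 < Kc τ 0 := Nat.pos_of_ne_zero h
  have h2 := (lt_Kc_iff hm hub h0 le_rfl).mp h1
  have h3 : τ 0 < τ 1 := hm (Nat.lt_succ_self 0)
  rw [h0] at h3
  linarith

include hm h0 in
lemma grid_nonneg (i : ℕ) : 0 ≤ τ i := by
  rw [← h0]; exact hm.monotone (Nat.zero_le i)

include hub hm h0 in
lemma gridSum_eq_sum (f : ℝ → ℝ → ℝ) {t : ℝ} (ht : 0 ≤ t) :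
    gridSum τ f t = ∑ i ∈ Finset.range (Kc τ t), f (τ i) (τ (i + 1)) := by
  rw [gridSum]
  rw [tsum_eq_sum (s := Finset.range (Kc τ t)) ?_]
  · exact Finset.sum_congr rfl fun i hi => by
      rw [if_pos ((lt_Kc_iff hm hub h0 ht).mp (Finset.mem_range.mp hi))]
  · intro i hi
    rw [if_neg]
    intro hc
    exact hi (Finset.mem_range.mpr ((lt_Kc_iff hm hub h0 ht).mpr hc))

include hub hm h0 in
/-- The Föllmer approximation estimate for a single grid. -/
lemma foellmer_est (X Y Q : ℝ → ℝ) {t δ ε : ℝ} (ht : 0 ≤ t) (hδ : 0 < δ)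
    {m : ℕ} (s : ℕ → ℝ) (hs0 : s 0 = 0) (hsm : s m = t)
    (hsle : ∀ j, s j ≤ s (j + 1)) (hstep : ∀ j, s (j + 1) - s j ≤ δ)
    (hmesh : ∀ i, τ (i + 1) - τ i ≤ δ)
    (hQmono : ∀ u v : ℝ, 0 ≤ u → u ≤ v → Q u ≤ Q v)
    (hXuc : ∀ u ∈ Icc 0 t, ∀ v ∈ Icc 0 t, |u - v| ≤ δ → |X u - X v| ≤ ε) :
    |(∑ i ∈ Finset.range (Kc τ t), X (τ i) *
        ((Y (τ (i+1)) - Y (τ i)) ^ 2 - (Q (τ (i+1)) - Q (τ i))))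
      - ∑ j ∈ Finset.range m, X (s j) *
          ((∑ i ∈ Finset.range (Kc τ (s (j+1))),
              ((Y (τ (i+1)) - Y (τ i)) ^ 2 - (Q (τ (i+1)) - Q (τ i))))
           - ∑ i ∈ Finset.range (Kc τ (s j)),
              ((Y (τ (i+1)) - Y (τ i)) ^ 2 - (Q (τ (i+1)) - Q (τ i))))|
      ≤ ε * ∑ i ∈ Finset.range (Kc τ t),
          ((Y (τ (i+1)) - Y (τ i)) ^ 2 + (Q (τ (i+1)) - Q (τ i))) := by
  set B : ℕ → ℝ := fun i => (Y (τ (i+1)) - Y (τ i)) ^ 2 - (Q (τ (i+1)) - Q (τ i)) with hB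
  set Hb : ℕ → ℝ := fun i => (Y (τ (i+1)) - Y (τ i)) ^ 2 + (Q (τ (i+1)) - Q (τ i)) with hHb
  set F : ℕ → ℝ := fun k => ∑ i ∈ Finset.range k, X (τ i) * B i with hF
  set Gp : ℕ → ℝ := fun k => ∑ i ∈ Finset.range k, B i with hGp
  set H : ℕ → ℝ := fun k => ∑ i ∈ Finset.range k, Hb i with hH
  set Kj : ℕ → ℕ := fun j => Kc τ (s j) with hKj
  have hsmono : ∀ j k : ℕ, j ≤ k → s j ≤ s k := by
    intro j k hjk
    induction k with
    | zero => simp_all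
    | succ k ih =>
      rcases Nat.lt_or_ge j (k+1) with h | h
      · exact le_trans (ih (Nat.lt_succ_iff.mp h)) (hsle k)
      · have : j = k + 1 := le_antisymm hjk h
        simp [this]
  have hsnn : ∀ j : ℕ, 0 ≤ s j := fun j => hs0 ▸ hsmono 0 j (Nat.zero_le j)
  have hsle_t : ∀ j : ℕ, j ≤ m → s j ≤ t := fun j hj => hsm ▸ hsmono j m hj
  have hKj0 : Kj 0 = 0 := by rw [hKj]; simp only [hs0]; exact Kc_zero hm hub h0
  have hKjm : Kj m = Kc τ t := by rw [hKj]; simp only [hsm]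
  have htel1 : ∑ j ∈ Finset.range m, (F (Kj (j+1)) - F (Kj j)) = F (Kc τ t) := by
    rw [Finset.sum_range_sub (fun j => F (Kj j)) m, hKjm, hKj0]
    simp [hF]
  have key : ∀ j < m, |(F (Kj (j+1)) - F (Kj j)) - X (s j) * (Gp (Kj (j+1)) - Gp (Kj j))|
      ≤ ε * (H (Kj (j+1)) - H (Kj j)) := by
    intro j hj
    have hab : Kj j ≤ Kj (j+1) := Kc_mono hm hub (hsle j)
    have hFd : F (Kj (j+1)) - F (Kj j) = ∑ i ∈ Finset.Ico (Kj j) (Kj (j+1)), X (τ i) * B i := by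
      rw [hF]; rw [Finset.sum_Ico_eq_sub _ hab]
    have hGd : Gp (Kj (j+1)) - Gp (Kj j) = ∑ i ∈ Finset.Ico (Kj j) (Kj (j+1)), B i := by
      rw [hGp]; rw [Finset.sum_Ico_eq_sub _ hab]
    have hHd : H (Kj (j+1)) - H (Kj j) = ∑ i ∈ Finset.Ico (Kj j) (Kj (j+1)), Hb i := by
      rw [hH]; rw [Finset.sum_Ico_eq_sub _ hab]
    rw [hFd, hGd, hHd, Finset.mul_sum, ← Finset.sum_sub_distrib, Finset.mul_sum]
    refine le_trans (Finset.abs_sum_le_sum_abs _ _) (Finset.sum_le_sum ?_)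
    intro i hi
    obtain ⟨hi1, hi2⟩ := Finset.mem_Ico.mp hi
    have hτ1 : τ (i+1) ≤ s (j+1) := (lt_Kc_iff hm hub h0 (hsnn (j+1))).mp hi2
    have hτ0 : s j < τ (i+1) := by
      by_contra hc
      push_neg at hc
      exact absurd ((lt_Kc_iff hm hub h0 (hsnn j)).mpr hc) (not_lt.mpr hi1)
    have hτi : τ i < τ (i+1) := hm (Nat.lt_succ_self i)
    have hτin : 0 ≤ τ i := grid_nonneg hm h0 i
    have hτit : τ i ≤ t := le_trans hτi.le (le_trans hτ1 (hsle_t (j+1) hj))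
    have hmeshi := hmesh i
    have hd : |τ i - s j| ≤ δ := by
      rw [abs_le]
      constructor
      · linarith
      · have := hstep j; linarith
    have hXd : |X (τ i) - X (s j)| ≤ ε :=
      hXuc (τ i) ⟨hτin, hτit⟩ (s j) ⟨hsnn j, hsle_t j hj.le⟩ hd
    have hQnn : 0 ≤ Q (τ (i+1)) - Q (τ i) := by
      have := hQmono (τ i) (τ (i+1)) hτin hτi.le; linarith
    have hBle : |B i| ≤ Hb i := by
      show |(Y (τ (i+1)) - Y (τ i)) ^ 2 - (Q (τ (i+1)) - Q (τ i))|
        ≤ (Y (τ (i+1)) - Y (τ i)) ^ 2 + (Q (τ (i+1)) - Q (τ i))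
      rw [abs_le]
      constructor <;> nlinarith [sq_nonneg (Y (τ (i+1)) - Y (τ i))]
    have hXB : X (τ i) * B i - X (s j) * B i = (X (τ i) - X (s j)) * B i := by ring
    rw [hXB, abs_mul]
    have hε0 : 0 ≤ ε := le_trans (abs_nonneg _) hXd
    calc |X (τ i) - X (s j)| * |B i| ≤ ε * |B i| :=
          mul_le_mul_of_nonneg_right hXd (abs_nonneg _)
      _ ≤ ε * Hb i := mul_le_mul_of_nonneg_left hBle hε0
  show |F (Kc τ t) - ∑ j ∈ Finset.range m, X (s j) * (Gp (Kj (j+1)) - Gp (Kj j))|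
      ≤ ε * H (Kc τ t)
  calc |F (Kc τ t) - ∑ j ∈ Finset.range m, X (s j) * (Gp (Kj (j+1)) - Gp (Kj j))|
      = |∑ j ∈ Finset.range m,
          ((F (Kj (j+1)) - F (Kj j)) - X (s j) * (Gp (Kj (j+1)) - Gp (Kj j)))| := by
        rw [Finset.sum_sub_distrib, htel1]
    _ ≤ ∑ j ∈ Finset.range m,
          |(F (Kj (j+1)) - F (Kj j)) - X (s j) * (Gp (Kj (j+1)) - Gp (Kj j))| :=
        Finset.abs_sum_le_sum_abs _ _
    _ ≤ ∑ j ∈ Finset.range m, ε * (H (Kj (j+1)) - H (Kj j)) :=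
        Finset.sum_le_sum (fun j hj => key j (Finset.mem_range.mp hj))
    _ = ε * (H (Kc τ t)) := by
        rw [← Finset.mul_sum, Finset.sum_range_sub (fun j => H (Kj j)) m, hKjm, hKj0]
        simp [hH]

end cut

/-- The last grid point below `s` tends to `s` as the mesh shrinks. -/
lemma tendsto_grid_last (G : GridSeq) {s : ℝ} (hs : 0 ≤ s) :
    Filter.Tendsto (fun N => G.T N (Kc (G.T N) s)) Filter.atTop (nhds s) := by
  rw [Metric.tendsto_atTop]
  intro ε hε
  obtain ⟨N₀, hN₀⟩ := G.mesh (ε / 2) (by linarith)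
  refine ⟨N₀, fun N hN => ?_⟩
  have h1 : G.T N (Kc (G.T N) s) ≤ s := Kc_le (G.mono N) (G.unbounded N) (G.zero N) hs
  have h2 : s < G.T N (Kc (G.T N) s + 1) :=
    Kc_succ_gt (G.mono N) (G.unbounded N) (G.zero N) hs
  have h3 := hN₀ N hN (Kc (G.T N) s)
  rw [Real.dist_eq, abs_lt]
  constructor <;> linarith

/-- A sequence eventually bounded by `C * ε` for every small `ε > 0` tends to 0. -/
lemma tendsto_zero_of_eventually_le {f : ℕ → ℝ} {C : ℝ} (hC : 0 ≤ C)
    (h : ∀ ε : ℝ, 0 < ε → ε ≤ 1 → ∀ᶠ N in Filter.atTop, |f N| ≤ C * ε) :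
    Filter.Tendsto f Filter.atTop (nhds 0) := by
  rw [NormedAddCommGroup.tendsto_nhds_zero]
  intro ε hε
  have hpos : (0:ℝ) < min 1 (ε / (2 * (C + 1))) := by positivity
  filter_upwards [h _ hpos (min_le_left _ _)] with N hN
  rw [Real.norm_eq_abs]
  calc |f N| ≤ C * min 1 (ε / (2 * (C + 1))) := hN
    _ ≤ C * (ε / (2 * (C + 1))) := by
        apply mul_le_mul_of_nonneg_left (min_le_right _ _) hC
    _ < ε := by
        rw [mul_div_assoc']
        rw [div_lt_iff₀ (show (0:ℝ) < 2 * (C + 1) by linarith)]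
        nlinarith

/-- Taylor remainder bound for `exp`. -/
lemma abs_exp_taylor3 {x : ℝ} (hx : |x| ≤ 1) :
    |Real.exp x - 1 - x - x ^ 2 / 2| ≤ |x| ^ 3 := by
  have h := Real.exp_bound hx (n := 3) (by norm_num)
  have hsum : ∑ m ∈ Finset.range 3, x ^ m / (m.factorial : ℝ) = 1 + x + x ^ 2 / 2 := by
    norm_num [Finset.sum_range_succ, Nat.factorial]
  rw [hsum] at h
  calc |Real.exp x - 1 - x - x ^ 2 / 2| = |Real.exp x - (1 + x + x ^ 2 / 2)| := by ring_nf
    _ ≤ |x| ^ 3 * (4 / (6 * 3)) := by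
        convert h using 2 <;> norm_num [Nat.factorial]
    _ ≤ |x| ^ 3 := by nlinarith [abs_nonneg x, pow_nonneg (abs_nonneg x) 3]

/-- Per-term Itô–Taylor identity for the exponential. -/
lemma term_id (Yu Yv Qu Qv : ℝ) :
    Real.exp (Yu - Qu / 2) * (Yv - Yu) =
      (Real.exp (Yv - Qv / 2) - Real.exp (Yu - Qu / 2))
      + Real.exp (Yu - Qu / 2) * (((Qv - Qu) - (Yv - Yu) ^ 2) / 2)
      + Real.exp (Yu - Qu / 2) *
          ((Yv - Yu) * ((Qv - Qu) / 2) - ((Qv - Qu) / 2) ^ 2 / 2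
            - (Real.exp ((Yv - Yu) - (Qv - Qu) / 2) - 1 - ((Yv - Yu) - (Qv - Qu) / 2)
                - ((Yv - Yu) - (Qv - Qu) / 2) ^ 2 / 2)) := by
  have h : Real.exp (Yv - Qv / 2)
      = Real.exp (Yu - Qu / 2) * Real.exp ((Yv - Yu) - (Qv - Qu) / 2) := by
    rw [← Real.exp_add]; ring_nf
  rw [h]; ring

lemma abs_le_abs_sub_add (a b : ℝ) : |a| ≤ |a - b| + |b| := by
  calc |a| = |(a - b) + b| := by ring_nf
    _ ≤ |a - b| + |b| := abs_add_le _ _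

/-- Bound for the higher-order error terms. -/
lemma small_term_bound {y q ε : ℝ} (hy : |y| ≤ ε / 2) (hq0 : 0 ≤ q) (hq : q ≤ ε / 2)
    (hε : 0 < ε) (hε1 : ε ≤ 1) :
    |y * (q / 2) - (q / 2) ^ 2 / 2 -
      (Real.exp (y - q / 2) - 1 - (y - q / 2) - (y - q / 2) ^ 2 / 2)|
      ≤ 3 * ε * (q / 2) + 2 * ε * y ^ 2 := by
  have hy' := abs_le.mp hy
  have hδ1 : |y - q / 2| ≤ 1 := by rw [abs_le]; constructor <;> linarith
  have hψ := abs_le.mp (abs_exp_taylor3 hδ1)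
  have hδε : |y - q / 2| ≤ 3 * ε / 4 := by rw [abs_le]; constructor <;> linarith
  have h3 : |y - q / 2| ^ 3 ≤ (3 * ε / 4) * (y - q / 2) ^ 2 := by
    have he : |y - q / 2| ^ 3 = |y - q / 2| * |y - q / 2| ^ 2 := by ring
    rw [he, sq_abs]
    exact mul_le_mul_of_nonneg_right hδε (sq_nonneg _)
  have hsq : (y - q / 2) ^ 2 ≤ 2 * y ^ 2 + 2 * (q / 2) ^ 2 := by
    nlinarith [sq_nonneg (y + q / 2)]
  rw [abs_le]
  constructor <;>
    nlinarith [h3, hsq, sq_nonneg y, sq_nonneg (q / 2), hy'.1, hy'.2, hψ.1, hψ.2,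
      mul_nonneg hq0 hε.le, sq_nonneg (y - q / 2), abs_nonneg (y - q / 2)]

/-- the pathwise Itô exponential `X_t = exp(Y_t − [Y]_t/2)`
satisfies `X_t = 1 + ∫_0^t X_s dY_s` with the pathwise Itô integral realized
as a limit of nonanticipative Riemann sums. -/
theorem stmt7 (G : GridSeq) (Y Q : ℝ → ℝ)
    (hY : ContinuousOn Y (Set.Ici 0)) (hY0 : Y 0 = 0) (hQ : HasQV G Y Q) :
    ∀ t ≥ 0, ConvTo G
      (fun u v => Real.exp (Y u - Q u / 2) * (Y v - Y u)) t
      (Real.exp (Y t - Q t / 2) - 1) := by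
  intro t ht
  obtain ⟨hQc, hQ0, hQconv⟩ := hQ
  set X : ℝ → ℝ := fun s => Real.exp (Y s - Q s / 2) with hXdef
  -- continuity of X
  have hXc : ContinuousOn X (Set.Ici 0) :=
    Real.continuous_exp.comp_continuousOn (hY.sub (hQc.div_const 2))
  have hX0 : X 0 = 1 := by simp [hXdef, hY0, hQ0]
  -- monotonicity of Q
  have hQmono : ∀ u v : ℝ, 0 ≤ u → u ≤ v → Q u ≤ Q v := by
    intro u v hu huv
    have hv : (0:ℝ) ≤ v := le_trans hu huv
    refine le_of_tendsto_of_tendsto (hQconv u) (hQconv v) ?_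
    filter_upwards with N
    rw [gridSum_eq_sum (G.mono N) (G.unbounded N) (G.zero N) _ hu,
        gridSum_eq_sum (G.mono N) (G.unbounded N) (G.zero N) _ hv]
    apply Finset.sum_le_sum_of_subset_of_nonneg
    · exact Finset.range_subset_range.mpr (Kc_mono (G.mono N) (G.unbounded N) huv)
    · intro i _ _
      positivity
  have hQt0 : 0 ≤ Q t := by
    have := hQmono 0 t le_rfl ht; rwa [hQ0] at this
  -- bound on X
  obtain ⟨M, hM⟩ := (isCompact_Icc (a := (0:ℝ)) (b := t)).exists_bound_of_continuousOn
    (hXc.mono Set.Icc_subset_Ici_self)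
  have hM0 : 0 ≤ M := le_trans (norm_nonneg _) (hM 0 ⟨le_rfl, ht⟩)
  have hMabs : ∀ x ∈ Set.Icc (0:ℝ) t, |X x| ≤ M := fun x hx => hM x hx
  -- uniform continuity
  have huc : ∀ (f : ℝ → ℝ), ContinuousOn f (Set.Ici 0) → ∀ ε > (0:ℝ), ∃ δ > (0:ℝ),
      ∀ u ∈ Set.Icc (0:ℝ) t, ∀ v ∈ Set.Icc (0:ℝ) t, |u - v| ≤ δ → |f u - f v| ≤ ε := by
    intro f hf ε hε
    have h1 : UniformContinuousOn f (Set.Icc 0 t) :=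
      isCompact_Icc.uniformContinuousOn_of_continuous (hf.mono Set.Icc_subset_Ici_self)
    obtain ⟨δ, hδ, h2⟩ := Metric.uniformContinuousOn_iff_le.mp h1 ε hε
    refine ⟨δ, hδ, fun u hu v hv hd => ?_⟩
    have := h2 u hu v hv (by rwa [Real.dist_eq])
    rwa [Real.dist_eq] at this
  -- continuous image of last grid point
  have hlast : ∀ (f : ℝ → ℝ), ContinuousOn f (Set.Ici 0) → ∀ s : ℝ, 0 ≤ s →
      Filter.Tendsto (fun N => f (G.T N (Kc (G.T N) s))) Filter.atTop (nhds (f s)) := by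
    intro f hf s hs
    have h1 : Filter.Tendsto (fun N => G.T N (Kc (G.T N) s)) Filter.atTop
        (nhdsWithin s (Set.Ici 0)) := by
      refine tendsto_nhdsWithin_of_tendsto_nhds_of_eventually_within _
        (tendsto_grid_last G hs) ?_
      exact Filter.Eventually.of_forall fun N =>
        grid_nonneg (G.mono N) (G.zero N) (Kc (G.T N) s)
    exact (hf s hs).tendsto.comp h1
  -- convergence of sums of squares
  have hsq : Filter.Tendsto (fun N => ∑ i ∈ Finset.range (Kc (G.T N) t),
      (Y (G.T N (i+1)) - Y (G.T N i)) ^ 2) Filter.atTop (nhds (Q t)) :=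
    (hQconv t).congr fun N =>
      gridSum_eq_sum (G.mono N) (G.unbounded N) (G.zero N) _ ht
  have hsqbd : ∀ᶠ N in Filter.atTop, ∑ i ∈ Finset.range (Kc (G.T N) t),
      (Y (G.T N (i+1)) - Y (G.T N i)) ^ 2 ≤ Q t + 1 :=
    hsq.eventually_le_const (lt_add_one (Q t))
  -- sum of Q increments
  have hQsum : ∀ N, ∑ i ∈ Finset.range (Kc (G.T N) t),
      (Q (G.T N (i+1)) - Q (G.T N i)) = Q (G.T N (Kc (G.T N) t)) := by
    intro N
    rw [Finset.sum_range_sub (fun i => Q (G.T N i)), G.zero N, hQ0, sub_zero]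
  have hQsum_le : ∀ N, ∑ i ∈ Finset.range (Kc (G.T N) t),
      (Q (G.T N (i+1)) - Q (G.T N i)) ≤ Q t := by
    intro N
    rw [hQsum N]
    exact hQmono _ _ (grid_nonneg (G.mono N) (G.zero N) _)
      (Kc_le (G.mono N) (G.unbounded N) (G.zero N) ht)
  -- the Föllmer term tends to 0
  have hWlim : Filter.Tendsto (fun N => ∑ i ∈ Finset.range (Kc (G.T N) t),
      X (G.T N i) * ((Y (G.T N (i+1)) - Y (G.T N i)) ^ 2
        - (Q (G.T N (i+1)) - Q (G.T N i)))) Filter.atTop (nhds 0) := by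
    apply tendsto_zero_of_eventually_le (C := 2 * Q t + 2) (by linarith)
    intro ε hε hε1
    obtain ⟨δ, hδ, hXuc⟩ := huc X hXc ε hε
    obtain ⟨m', hm'⟩ := exists_nat_gt (t / δ)
    set m : ℕ := m' + 1 with hmdef
    have hm0 : 0 < m := Nat.succ_pos _
    have hmR : (0:ℝ) < m := by exact_mod_cast hm0
    have htm : t / m ≤ δ := by
      rw [div_le_iff₀ hmR]
      have h1 : t / δ < m := lt_of_lt_of_le hm' (by exact_mod_cast Nat.le_succ m')
      rw [div_lt_iff₀ hδ] at h1
      nlinarith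
    set s : ℕ → ℝ := fun j => t * j / m with hsdef
    have hs0 : s 0 = 0 := by simp [hsdef]
    have hsm : s m = t := by simp only [hsdef]; exact mul_div_cancel_right₀ t hmR.ne'
    have hsnn : ∀ j : ℕ, 0 ≤ s j := by
      intro j
      apply div_nonneg _ hmR.le
      positivity
    have hsle : ∀ j : ℕ, s j ≤ s (j+1) := by
      intro j
      simp only [hsdef]
      push_cast
      gcongr
      linarith
    have hstep : ∀ j : ℕ, s (j+1) - s j ≤ δ := by
      intro j
      have he : s (j+1) - s j = t / m := by
        simp only [hsdef]
        push_cast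
        field_simp
        ring
      rw [he]; exact htm
    -- the comparison sums converge to 0
    have hGpj : ∀ j : ℕ, Filter.Tendsto (fun N => ∑ i ∈ Finset.range (Kc (G.T N) (s j)),
        ((Y (G.T N (i+1)) - Y (G.T N i)) ^ 2 - (Q (G.T N (i+1)) - Q (G.T N i))))
        Filter.atTop (nhds 0) := by
      intro j
      have h1 : Filter.Tendsto (fun N => ∑ i ∈ Finset.range (Kc (G.T N) (s j)),
          (Y (G.T N (i+1)) - Y (G.T N i)) ^ 2) Filter.atTop (nhds (Q (s j))) :=
        (hQconv (s j)).congr fun N =>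
          gridSum_eq_sum (G.mono N) (G.unbounded N) (G.zero N) _ (hsnn j)
      have h2 : Filter.Tendsto (fun N => Q (G.T N (Kc (G.T N) (s j))))
          Filter.atTop (nhds (Q (s j))) := hlast Q hQc (s j) (hsnn j)
      have h3 := h1.sub h2
      rw [sub_self] at h3
      refine h3.congr fun N => ?_
      rw [Finset.sum_sub_distrib, Finset.sum_range_sub (fun i => Q (G.T N i)),
        G.zero N, hQ0]
      ring
    have hV : Filter.Tendsto (fun N => ∑ j ∈ Finset.range m, X (s j) *
        ((∑ i ∈ Finset.range (Kc (G.T N) (s (j+1))),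
            ((Y (G.T N (i+1)) - Y (G.T N i)) ^ 2 - (Q (G.T N (i+1)) - Q (G.T N i))))
         - ∑ i ∈ Finset.range (Kc (G.T N) (s j)),
            ((Y (G.T N (i+1)) - Y (G.T N i)) ^ 2 - (Q (G.T N (i+1)) - Q (G.T N i)))))
        Filter.atTop (nhds 0) := by
      have h4 := tendsto_finset_sum (Finset.range m)
        (f := fun j N => X (s j) *
          ((∑ i ∈ Finset.range (Kc (G.T N) (s (j+1))),
              ((Y (G.T N (i+1)) - Y (G.T N i)) ^ 2 - (Q (G.T N (i+1)) - Q (G.T N i))))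
           - ∑ i ∈ Finset.range (Kc (G.T N) (s j)),
              ((Y (G.T N (i+1)) - Y (G.T N i)) ^ 2 - (Q (G.T N (i+1)) - Q (G.T N i)))))
        (a := fun _ => 0)
        (fun j _ => by simpa using ((hGpj (j+1)).sub (hGpj j)).const_mul (X (s j)))
      simpa using h4
    have hVev : ∀ᶠ N in Filter.atTop, |∑ j ∈ Finset.range m, X (s j) *
        ((∑ i ∈ Finset.range (Kc (G.T N) (s (j+1))),
            ((Y (G.T N (i+1)) - Y (G.T N i)) ^ 2 - (Q (G.T N (i+1)) - Q (G.T N i))))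
         - ∑ i ∈ Finset.range (Kc (G.T N) (s j)),
            ((Y (G.T N (i+1)) - Y (G.T N i)) ^ 2 - (Q (G.T N (i+1)) - Q (G.T N i))))| ≤ ε := by
      have := (NormedAddCommGroup.tendsto_nhds_zero.mp hV) ε hε
      filter_upwards [this] with N hN
      rw [Real.norm_eq_abs] at hN
      exact hN.le
    obtain ⟨N₁, hN₁⟩ := G.mesh δ hδ
    have hmeshEv : ∀ᶠ N in Filter.atTop, ∀ i, G.T N (i+1) - G.T N i ≤ δ :=
      Filter.eventually_atTop.mpr ⟨N₁, fun N hN => hN₁ N hN⟩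
    filter_upwards [hVev, hmeshEv, hsqbd] with N hVb hmeshN hsqb
    have hest := foellmer_est (G.mono N) (G.unbounded N) (G.zero N) X Y Q ht hδ
      s hs0 hsm hsle hstep hmeshN hQmono hXuc
    have hsplit : ∑ i ∈ Finset.range (Kc (G.T N) t),
        ((Y (G.T N (i+1)) - Y (G.T N i)) ^ 2 + (Q (G.T N (i+1)) - Q (G.T N i)))
        ≤ 2 * Q t + 1 := by
      rw [Finset.sum_add_distrib]
      have := hQsum_le N
      linarith
    have hε0 : (0:ℝ) ≤ ε := hε.le
    calc |∑ i ∈ Finset.range (Kc (G.T N) t), X (G.T N i) *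
          ((Y (G.T N (i+1)) - Y (G.T N i)) ^ 2 - (Q (G.T N (i+1)) - Q (G.T N i)))|
        ≤ |(∑ i ∈ Finset.range (Kc (G.T N) t), X (G.T N i) *
            ((Y (G.T N (i+1)) - Y (G.T N i)) ^ 2 - (Q (G.T N (i+1)) - Q (G.T N i))))
          - ∑ j ∈ Finset.range m, X (s j) *
            ((∑ i ∈ Finset.range (Kc (G.T N) (s (j+1))),
                ((Y (G.T N (i+1)) - Y (G.T N i)) ^ 2 - (Q (G.T N (i+1)) - Q (G.T N i))))
             - ∑ i ∈ Finset.range (Kc (G.T N) (s j)),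
                ((Y (G.T N (i+1)) - Y (G.T N i)) ^ 2 - (Q (G.T N (i+1)) - Q (G.T N i))))|
          + |∑ j ∈ Finset.range m, X (s j) *
            ((∑ i ∈ Finset.range (Kc (G.T N) (s (j+1))),
                ((Y (G.T N (i+1)) - Y (G.T N i)) ^ 2 - (Q (G.T N (i+1)) - Q (G.T N i))))
             - ∑ i ∈ Finset.range (Kc (G.T N) (s j)),
                ((Y (G.T N (i+1)) - Y (G.T N i)) ^ 2 - (Q (G.T N (i+1)) - Q (G.T N i))))| := by
          exact abs_le_abs_sub_add _ _
      _ ≤ ε * (2 * Q t + 1) + ε := by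
          have h5 := hest.trans (mul_le_mul_of_nonneg_left hsplit hε0)
          exact add_le_add h5 hVb
      _ ≤ (2 * Q t + 2) * ε := le_of_eq (by ring)
  -- the higher-order error term tends to 0
  have hT2lim : Filter.Tendsto (fun N => ∑ i ∈ Finset.range (Kc (G.T N) t),
      X (G.T N i) * ((Y (G.T N (i+1)) - Y (G.T N i)) * ((Q (G.T N (i+1)) - Q (G.T N i)) / 2)
        - ((Q (G.T N (i+1)) - Q (G.T N i)) / 2) ^ 2 / 2
        - (Real.exp ((Y (G.T N (i+1)) - Y (G.T N i)) - (Q (G.T N (i+1)) - Q (G.T N i)) / 2)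
            - 1 - ((Y (G.T N (i+1)) - Y (G.T N i)) - (Q (G.T N (i+1)) - Q (G.T N i)) / 2)
            - ((Y (G.T N (i+1)) - Y (G.T N i)) - (Q (G.T N (i+1)) - Q (G.T N i)) / 2) ^ 2 / 2)))
      Filter.atTop (nhds 0) := by
    apply tendsto_zero_of_eventually_le (C := M * (4 * Q t + 2)) (by positivity)
    intro ε hε hε1
    obtain ⟨δ₁, hδ₁, hYuc⟩ := huc Y hY (ε / 2) (by linarith)
    obtain ⟨δ₂, hδ₂, hQuc⟩ := huc Q hQc (ε / 2) (by linarith)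
    obtain ⟨N₁, hN₁⟩ := G.mesh (min δ₁ δ₂) (lt_min hδ₁ hδ₂)
    have hmeshEv : ∀ᶠ N in Filter.atTop, ∀ i, G.T N (i+1) - G.T N i ≤ min δ₁ δ₂ :=
      Filter.eventually_atTop.mpr ⟨N₁, fun N hN => hN₁ N hN⟩
    filter_upwards [hmeshEv, hsqbd] with N hmeshN hsqb
    have hterm : ∀ i ∈ Finset.range (Kc (G.T N) t),
        |X (G.T N i) * ((Y (G.T N (i+1)) - Y (G.T N i)) * ((Q (G.T N (i+1)) - Q (G.T N i)) / 2)
          - ((Q (G.T N (i+1)) - Q (G.T N i)) / 2) ^ 2 / 2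
          - (Real.exp ((Y (G.T N (i+1)) - Y (G.T N i)) - (Q (G.T N (i+1)) - Q (G.T N i)) / 2)
              - 1 - ((Y (G.T N (i+1)) - Y (G.T N i)) - (Q (G.T N (i+1)) - Q (G.T N i)) / 2)
              - ((Y (G.T N (i+1)) - Y (G.T N i)) - (Q (G.T N (i+1)) - Q (G.T N i)) / 2) ^ 2 / 2))|
        ≤ M * (3 * ε * ((Q (G.T N (i+1)) - Q (G.T N i)) / 2)
            + 2 * ε * (Y (G.T N (i+1)) - Y (G.T N i)) ^ 2) := by
      intro i hi
      have hiK := Finset.mem_range.mp hi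
      have hτ1t : G.T N (i+1) ≤ t :=
        (lt_Kc_iff (G.mono N) (G.unbounded N) (G.zero N) ht).mp hiK
      have hτi : G.T N i < G.T N (i+1) := G.mono N (Nat.lt_succ_self i)
      have hτin : 0 ≤ G.T N i := grid_nonneg (G.mono N) (G.zero N) i
      have hmem1 : G.T N i ∈ Set.Icc (0:ℝ) t := ⟨hτin, le_trans hτi.le hτ1t⟩
      have hmem2 : G.T N (i+1) ∈ Set.Icc (0:ℝ) t := ⟨le_trans hτin hτi.le, hτ1t⟩
      have hdist : |G.T N (i+1) - G.T N i| ≤ min δ₁ δ₂ := by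
        rw [abs_of_nonneg (by linarith)]
        exact hmeshN i
      have hy : |Y (G.T N (i+1)) - Y (G.T N i)| ≤ ε / 2 :=
        hYuc _ hmem2 _ hmem1 (le_trans hdist (min_le_left _ _))
      have hq : |Q (G.T N (i+1)) - Q (G.T N i)| ≤ ε / 2 :=
        hQuc _ hmem2 _ hmem1 (le_trans hdist (min_le_right _ _))
      have hq0 : 0 ≤ Q (G.T N (i+1)) - Q (G.T N i) := by
        have := hQmono _ _ hτin hτi.le; linarith
      have hq' : Q (G.T N (i+1)) - Q (G.T N i) ≤ ε / 2 := le_trans (le_abs_self _) hq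
      have hb := small_term_bound hy hq0 hq' hε hε1
      rw [abs_mul]
      have hXb : |X (G.T N i)| ≤ M := hMabs _ hmem1
      calc |X (G.T N i)| * |(Y (G.T N (i+1)) - Y (G.T N i)) * ((Q (G.T N (i+1)) - Q (G.T N i)) / 2)
            - ((Q (G.T N (i+1)) - Q (G.T N i)) / 2) ^ 2 / 2
            - (Real.exp ((Y (G.T N (i+1)) - Y (G.T N i)) - (Q (G.T N (i+1)) - Q (G.T N i)) / 2)
                - 1 - ((Y (G.T N (i+1)) - Y (G.T N i)) - (Q (G.T N (i+1)) - Q (G.T N i)) / 2)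
                - ((Y (G.T N (i+1)) - Y (G.T N i)) - (Q (G.T N (i+1)) - Q (G.T N i)) / 2) ^ 2 / 2)|
          ≤ M * |(Y (G.T N (i+1)) - Y (G.T N i)) * ((Q (G.T N (i+1)) - Q (G.T N i)) / 2)
            - ((Q (G.T N (i+1)) - Q (G.T N i)) / 2) ^ 2 / 2
            - (Real.exp ((Y (G.T N (i+1)) - Y (G.T N i)) - (Q (G.T N (i+1)) - Q (G.T N i)) / 2)
                - 1 - ((Y (G.T N (i+1)) - Y (G.T N i)) - (Q (G.T N (i+1)) - Q (G.T N i)) / 2)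
                - ((Y (G.T N (i+1)) - Y (G.T N i)) - (Q (G.T N (i+1)) - Q (G.T N i)) / 2) ^ 2 / 2)| :=
            mul_le_mul_of_nonneg_right hXb (abs_nonneg _)
        _ ≤ M * (3 * ε * ((Q (G.T N (i+1)) - Q (G.T N i)) / 2)
            + 2 * ε * (Y (G.T N (i+1)) - Y (G.T N i)) ^ 2) :=
            mul_le_mul_of_nonneg_left hb hM0
    calc |∑ i ∈ Finset.range (Kc (G.T N) t),
          X (G.T N i) * ((Y (G.T N (i+1)) - Y (G.T N i)) * ((Q (G.T N (i+1)) - Q (G.T N i)) / 2)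
            - ((Q (G.T N (i+1)) - Q (G.T N i)) / 2) ^ 2 / 2
            - (Real.exp ((Y (G.T N (i+1)) - Y (G.T N i)) - (Q (G.T N (i+1)) - Q (G.T N i)) / 2)
                - 1 - ((Y (G.T N (i+1)) - Y (G.T N i)) - (Q (G.T N (i+1)) - Q (G.T N i)) / 2)
                - ((Y (G.T N (i+1)) - Y (G.T N i)) - (Q (G.T N (i+1)) - Q (G.T N i)) / 2) ^ 2 / 2))|
        ≤ ∑ i ∈ Finset.range (Kc (G.T N) t),
          |X (G.T N i) * ((Y (G.T N (i+1)) - Y (G.T N i)) * ((Q (G.T N (i+1)) - Q (G.T N i)) / 2)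
            - ((Q (G.T N (i+1)) - Q (G.T N i)) / 2) ^ 2 / 2
            - (Real.exp ((Y (G.T N (i+1)) - Y (G.T N i)) - (Q (G.T N (i+1)) - Q (G.T N i)) / 2)
                - 1 - ((Y (G.T N (i+1)) - Y (G.T N i)) - (Q (G.T N (i+1)) - Q (G.T N i)) / 2)
                - ((Y (G.T N (i+1)) - Y (G.T N i)) - (Q (G.T N (i+1)) - Q (G.T N i)) / 2) ^ 2 / 2))| :=
          Finset.abs_sum_le_sum_abs _ _
      _ ≤ ∑ i ∈ Finset.range (Kc (G.T N) t),
          M * (3 * ε * ((Q (G.T N (i+1)) - Q (G.T N i)) / 2)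
            + 2 * ε * (Y (G.T N (i+1)) - Y (G.T N i)) ^ 2) :=
          Finset.sum_le_sum hterm
      _ = M * ((3 * ε / 2) * ∑ i ∈ Finset.range (Kc (G.T N) t), (Q (G.T N (i+1)) - Q (G.T N i))
            + 2 * ε * ∑ i ∈ Finset.range (Kc (G.T N) t), (Y (G.T N (i+1)) - Y (G.T N i)) ^ 2) := by
          rw [Finset.mul_sum, Finset.mul_sum, ← Finset.sum_add_distrib, Finset.mul_sum]
          exact Finset.sum_congr rfl fun i _ => by ring
      _ ≤ M * (4 * Q t + 2) * ε := by
          have h1 := hQsum_le N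
          have h2 : (0:ℝ) ≤ ∑ i ∈ Finset.range (Kc (G.T N) t),
              (Q (G.T N (i+1)) - Q (G.T N i)) := by
            rw [hQsum N]
            have := hQmono 0 (G.T N (Kc (G.T N) t)) le_rfl
              (grid_nonneg (G.mono N) (G.zero N) _)
            rw [hQ0] at this
            exact this
          have h3 : (0:ℝ) ≤ ∑ i ∈ Finset.range (Kc (G.T N) t),
              (Y (G.T N (i+1)) - Y (G.T N i)) ^ 2 :=
            Finset.sum_nonneg fun i _ => sq_nonneg _
          nlinarith [mul_nonneg (mul_nonneg hM0 hε.le) (sub_nonneg.mpr h1),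
            mul_nonneg (mul_nonneg hM0 hε.le) (sub_nonneg.mpr hsqb),
            mul_nonneg hM0 hε.le, mul_nonneg (mul_nonneg hM0 hε.le) hQt0]
  -- convergence of the endpoint term
  have hEnd : Filter.Tendsto (fun N => X (G.T N (Kc (G.T N) t)) - 1)
      Filter.atTop (nhds (X t - 1)) := (hlast X hXc t ht).sub_const 1
  -- the pathwise identity
  have hid : ∀ N, (∑ i ∈ Finset.range (Kc (G.T N) t),
      X (G.T N i) * (Y (G.T N (i+1)) - Y (G.T N i)))
      = (X (G.T N (Kc (G.T N) t)) - 1)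
        + (∑ i ∈ Finset.range (Kc (G.T N) t),
            X (G.T N i) * (((Q (G.T N (i+1)) - Q (G.T N i))
              - (Y (G.T N (i+1)) - Y (G.T N i)) ^ 2) / 2))
        + (∑ i ∈ Finset.range (Kc (G.T N) t),
            X (G.T N i) * ((Y (G.T N (i+1)) - Y (G.T N i)) * ((Q (G.T N (i+1)) - Q (G.T N i)) / 2)
              - ((Q (G.T N (i+1)) - Q (G.T N i)) / 2) ^ 2 / 2
              - (Real.exp ((Y (G.T N (i+1)) - Y (G.T N i)) - (Q (G.T N (i+1)) - Q (G.T N i)) / 2)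
                  - 1 - ((Y (G.T N (i+1)) - Y (G.T N i)) - (Q (G.T N (i+1)) - Q (G.T N i)) / 2)
                  - ((Y (G.T N (i+1)) - Y (G.T N i))
                      - (Q (G.T N (i+1)) - Q (G.T N i)) / 2) ^ 2 / 2))) := by
    intro N
    have e1 : (∑ i ∈ Finset.range (Kc (G.T N) t),
        X (G.T N i) * (Y (G.T N (i+1)) - Y (G.T N i)))
        = ∑ i ∈ Finset.range (Kc (G.T N) t),
          ((X (G.T N (i+1)) - X (G.T N i))
            + X (G.T N i) * (((Q (G.T N (i+1)) - Q (G.T N i))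
                - (Y (G.T N (i+1)) - Y (G.T N i)) ^ 2) / 2)
            + X (G.T N i) * ((Y (G.T N (i+1)) - Y (G.T N i)) * ((Q (G.T N (i+1)) - Q (G.T N i)) / 2)
                - ((Q (G.T N (i+1)) - Q (G.T N i)) / 2) ^ 2 / 2
                - (Real.exp ((Y (G.T N (i+1)) - Y (G.T N i)) - (Q (G.T N (i+1)) - Q (G.T N i)) / 2)
                    - 1 - ((Y (G.T N (i+1)) - Y (G.T N i)) - (Q (G.T N (i+1)) - Q (G.T N i)) / 2)
                    - ((Y (G.T N (i+1)) - Y (G.T N i))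
                        - (Q (G.T N (i+1)) - Q (G.T N i)) / 2) ^ 2 / 2))) :=
      Finset.sum_congr rfl fun i _ =>
        term_id (Y (G.T N i)) (Y (G.T N (i+1))) (Q (G.T N i)) (Q (G.T N (i+1)))
    rw [e1, Finset.sum_add_distrib, Finset.sum_add_distrib,
      Finset.sum_range_sub (fun i => X (G.T N i))]
    rw [G.zero N, hX0]
  -- the Föllmer term with the right sign
  have hT1lim : Filter.Tendsto (fun N => ∑ i ∈ Finset.range (Kc (G.T N) t),
      X (G.T N i) * (((Q (G.T N (i+1)) - Q (G.T N i))
        - (Y (G.T N (i+1)) - Y (G.T N i)) ^ 2) / 2)) Filter.atTop (nhds 0) := by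
    have h5 := hWlim.const_mul (-(1:ℝ)/2)
    rw [mul_zero] at h5
    refine h5.congr fun N => ?_
    rw [Finset.mul_sum]
    exact Finset.sum_congr rfl fun i _ => by ring
  -- assembling
  have hmain : Filter.Tendsto (fun N => ∑ i ∈ Finset.range (Kc (G.T N) t),
      X (G.T N i) * (Y (G.T N (i+1)) - Y (G.T N i))) Filter.atTop (nhds (X t - 1)) := by
    have h6 := (hEnd.add hT1lim).add hT2lim
    rw [add_zero, add_zero] at h6
    exact h6.congr fun N => (hid N).symm
  show Filter.Tendsto (fun N => gridSum (G.T N)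
      (fun u v => Real.exp (Y u - Q u / 2) * (Y v - Y u)) t) Filter.atTop
      (nhds (Real.exp (Y t - Q t / 2) - 1))
  exact hmain.congr fun N =>
    (gridSum_eq_sum (G.mono N) (G.unbounded N) (G.zero N)
      (fun u v => Real.exp (Y u - Q u / 2) * (Y v - Y u)) ht).symm
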